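/- In the coupon collector's problem with n coupons, for any ε ∈ (0,1), the probability that the number τ_{⌈(1-ε)n⌉} of draws needed to obtain ⌈(1-ε)n⌉ distinct coupons is at most 2((1-ε)/ε)·n tends to 1 as n → ∞. -/

import Mathlib

open MeasureTheory ProbabilityTheory Filter

lemma aux_summable_lin {q : ℝ} (h0 : 0 ≤ q) (h1 : q < 1) :
    Summable (fun k : ℕ => (k : ℝ) * q ^ k) := by
  have := summable_pow_mul_geometric_of_norm_lt_one (R := ℝ) 1
    (r := q) (by rwa [Real.norm_eq_abs, abs_of_nonneg h0])
  simpa using this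

lemma aux_summable_sq {q : ℝ} (h0 : 0 ≤ q) (h1 : q < 1) :
    Summable (fun k : ℕ => (k : ℝ) ^ 2 * q ^ k) := by
  have := summable_pow_mul_geometric_of_norm_lt_one (R := ℝ) 2
    (r := q) (by rwa [Real.norm_eq_abs, abs_of_nonneg h0])
  simpa using this

lemma aux_tsum_lin {q : ℝ} (h0 : 0 ≤ q) (h1 : q < 1) :
    ∑' k : ℕ, (k : ℝ) * q ^ k = q / (1 - q) ^ 2 :=
  tsum_coe_mul_geometric_of_norm_lt_one (by rwa [Real.norm_eq_abs, abs_of_nonneg h0])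

lemma aux_tsum_geom {q : ℝ} (h0 : 0 ≤ q) (h1 : q < 1) :
    ∑' k : ℕ, q ^ k = 1 / (1 - q) := by
  rw [tsum_geometric_of_lt_one h0 h1, one_div]

lemma aux_tsum_sq {q : ℝ} (h0 : 0 ≤ q) (h1 : q < 1) :
    ∑' k : ℕ, (k : ℝ) ^ 2 * q ^ k = q * (1 + q) / (1 - q) ^ 3 := by
  have hs2 := aux_summable_sq h0 h1
  have hs1 := aux_summable_lin h0 h1
  have hs0 : Summable (fun k : ℕ => q ^ k) := summable_geometric_of_lt_one h0 h1
  have hfun : ∀ k : ℕ, ((k : ℝ) + 1) ^ 2 * q ^ (k + 1)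
      = q * ((k : ℝ) ^ 2 * q ^ k + (2 * ((k : ℝ) * q ^ k) + q ^ k)) := by
    intro k; ring
  have key : ∑' k : ℕ, ((k : ℝ) + 1) ^ 2 * q ^ (k + 1)
      = q * ((∑' k : ℕ, (k : ℝ) ^ 2 * q ^ k) + (2 * (q / (1 - q) ^ 2) + 1 / (1 - q))) := by
    rw [tsum_congr hfun, tsum_mul_left, Summable.tsum_add hs2 ((hs1.mul_left 2).add hs0),
      Summable.tsum_add (hs1.mul_left 2) hs0, tsum_mul_left, aux_tsum_lin h0 h1, aux_tsum_geom h0 h1]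
  have hshift : ∑' k : ℕ, (k : ℝ) ^ 2 * q ^ k = ∑' k : ℕ, ((k : ℝ) + 1) ^ 2 * q ^ (k + 1) := by
    rw [Summable.tsum_eq_zero_add hs2]
    push_cast
    simp
  have hkey2 : ∑' k : ℕ, (k : ℝ) ^ 2 * q ^ k
      = q * ((∑' k : ℕ, (k : ℝ) ^ 2 * q ^ k) + (2 * (q / (1 - q) ^ 2) + 1 / (1 - q))) :=
    hshift.trans key
  have hq : (1 : ℝ) - q ≠ 0 := by linarith
  field_simp at hkey2 ⊢
  nlinarith [hkey2]

lemma geom_shift (p : ℝ) (f : ℕ → ℝ) :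
    (fun k : ℕ => f (k + 1) * (p * (1 - p) ^ (k + 1 - 1)))
      = fun k : ℕ => f (k + 1) * (p * (1 - p) ^ k) := by
  funext k; simp

lemma geom_summable_first {p : ℝ} (hp0 : 0 < p) (hp1 : p ≤ 1) :
    Summable (fun k : ℕ => (k : ℝ) * (p * (1 - p) ^ (k - 1))) := by
  have h0 : 0 ≤ 1 - p := by linarith
  have h1 : 1 - p < 1 := by linarith
  rw [← summable_nat_add_iff 1]
  have : (fun k : ℕ => ((k + 1 : ℕ) : ℝ) * (p * (1 - p) ^ (k + 1 - 1)))
      = fun k : ℕ => p * ((k : ℝ) * (1 - p) ^ k + (1 - p) ^ k) := by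
    funext k; push_cast [Nat.add_sub_cancel]; ring
  rw [this]
  exact ((aux_summable_lin h0 h1).add (summable_geometric_of_lt_one h0 h1)).mul_left p

lemma geom_summable_sq {p : ℝ} (hp0 : 0 < p) (hp1 : p ≤ 1) :
    Summable (fun k : ℕ => (k : ℝ) ^ 2 * (p * (1 - p) ^ (k - 1))) := by
  have h0 : 0 ≤ 1 - p := by linarith
  have h1 : 1 - p < 1 := by linarith
  rw [← summable_nat_add_iff 1]
  have : (fun k : ℕ => ((k + 1 : ℕ) : ℝ) ^ 2 * (p * (1 - p) ^ (k + 1 - 1)))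
      = fun k : ℕ => p * ((k : ℝ) ^ 2 * (1 - p) ^ k
          + (2 * ((k : ℝ) * (1 - p) ^ k) + (1 - p) ^ k)) := by
    funext k; push_cast [Nat.add_sub_cancel]; ring
  rw [this]
  exact (((aux_summable_sq h0 h1).add
    (((aux_summable_lin h0 h1).mul_left 2).add (summable_geometric_of_lt_one h0 h1))).mul_left p)

lemma geom_tsum_first {p : ℝ} (hp0 : 0 < p) (hp1 : p ≤ 1) :
    ∑' k : ℕ, (k : ℝ) * (p * (1 - p) ^ (k - 1)) = 1 / p := by
  have h0 : 0 ≤ 1 - p := by linarith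
  have h1 : 1 - p < 1 := by linarith
  rw [Summable.tsum_eq_zero_add (geom_summable_first hp0 hp1)]
  have : (fun k : ℕ => ((k + 1 : ℕ) : ℝ) * (p * (1 - p) ^ (k + 1 - 1)))
      = fun k : ℕ => p * ((k : ℝ) * (1 - p) ^ k + (1 - p) ^ k) := by
    funext k; push_cast [Nat.add_sub_cancel]; ring
  rw [this, tsum_mul_left, Summable.tsum_add (aux_summable_lin h0 h1) (summable_geometric_of_lt_one h0 h1),
    aux_tsum_lin h0 h1, aux_tsum_geom h0 h1]
  have hq : (1 : ℝ) - (1 - p) = p := by ring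
  rw [hq]
  have hp : p ≠ 0 := ne_of_gt hp0
  norm_num
  field_simp
  try ring
  try tauto

lemma geom_tsum_sq {p : ℝ} (hp0 : 0 < p) (hp1 : p ≤ 1) :
    ∑' k : ℕ, (k : ℝ) ^ 2 * (p * (1 - p) ^ (k - 1)) = (2 - p) / p ^ 2 := by
  have h0 : 0 ≤ 1 - p := by linarith
  have h1 : 1 - p < 1 := by linarith
  rw [Summable.tsum_eq_zero_add (geom_summable_sq hp0 hp1)]
  have : (fun k : ℕ => ((k + 1 : ℕ) : ℝ) ^ 2 * (p * (1 - p) ^ (k + 1 - 1)))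
      = fun k : ℕ => p * ((k : ℝ) ^ 2 * (1 - p) ^ k
          + (2 * ((k : ℝ) * (1 - p) ^ k) + (1 - p) ^ k)) := by
    funext k; push_cast [Nat.add_sub_cancel]; ring
  rw [this, tsum_mul_left,
    Summable.tsum_add (aux_summable_sq h0 h1)
      (((aux_summable_lin h0 h1).mul_left 2).add (summable_geometric_of_lt_one h0 h1)),
    Summable.tsum_add ((aux_summable_lin h0 h1).mul_left 2) (summable_geometric_of_lt_one h0 h1),
    tsum_mul_left, aux_tsum_sq h0 h1, aux_tsum_lin h0 h1, aux_tsum_geom h0 h1]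
  have hq : (1 : ℝ) - (1 - p) = p := by ring
  rw [hq]
  have hp : p ≠ 0 := ne_of_gt hp0
  norm_num
  field_simp
  try ring
  try tauto

section geomMeasure
variable (ν : Measure ℕ) {p : ℝ}

lemma geom_term_sq (hp0 : 0 < p) (hp1 : p ≤ 1) (h0 : ν {0} = 0)
    (hk : ∀ k : ℕ, 1 ≤ k → ν {k} = ENNReal.ofReal (p * (1 - p) ^ (k - 1))) :
    ∀ k : ℕ, (‖((k : ℕ) : ℝ) ^ 2‖₊ : ENNReal) * ν {k}
      = ENNReal.ofReal (((k : ℕ) : ℝ) ^ 2 * (p * (1 - p) ^ (k - 1))) := by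
  have hq0 : (0 : ℝ) ≤ 1 - p := by linarith
  intro k
  cases k with
  | zero => simp [h0]
  | succ m =>
    rw [hk _ (Nat.succ_le_succ (Nat.zero_le m)),
      ← enorm_eq_nnnorm, Real.enorm_eq_ofReal (by positivity),
      ← ENNReal.ofReal_mul (by positivity)]

lemma geom_memLp2 [IsProbabilityMeasure ν] (hp0 : 0 < p) (hp1 : p ≤ 1) (h0 : ν {0} = 0)
    (hk : ∀ k : ℕ, 1 ≤ k → ν {k} = ENNReal.ofReal (p * (1 - p) ^ (k - 1))) :
    MemLp (fun k : ℕ => (k : ℝ)) 2 ν := by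
  have hq0 : (0 : ℝ) ≤ 1 - p := by linarith
  have hmeas : AEStronglyMeasurable (fun k : ℕ => (k : ℝ)) ν :=
    (measurable_from_top (f := fun k : ℕ => (k : ℝ))).aestronglyMeasurable
  rw [memLp_two_iff_integrable_sq hmeas]
  refine ⟨(measurable_from_top (f := fun k : ℕ => ((k : ℝ)) ^ 2)).aestronglyMeasurable, ?_⟩
  show (∫⁻ k, (‖((k : ℕ) : ℝ) ^ 2‖₊ : ENNReal) ∂ν) < ⊤
  rw [lintegral_countable' (fun k : ℕ => (‖((k : ℕ) : ℝ) ^ 2‖₊ : ENNReal))]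
  rw [tsum_congr (geom_term_sq ν hp0 hp1 h0 hk),
    ← ENNReal.ofReal_tsum_of_nonneg (fun k => by positivity) (geom_summable_sq hp0 hp1)]
  exact ENNReal.ofReal_lt_top

lemma geom_integral_first [IsProbabilityMeasure ν] (hp0 : 0 < p) (hp1 : p ≤ 1) (h0 : ν {0} = 0)
    (hk : ∀ k : ℕ, 1 ≤ k → ν {k} = ENNReal.ofReal (p * (1 - p) ^ (k - 1))) :
    ∫ k, ((k : ℕ) : ℝ) ∂ν = 1 / p := by
  have hq0 : (0 : ℝ) ≤ 1 - p := by linarith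
  have hint : Integrable (fun k : ℕ => (k : ℝ)) ν :=
    (geom_memLp2 ν hp0 hp1 h0 hk).integrable one_le_two
  rw [integral_countable' hint]
  have hterm : ∀ k : ℕ, (ν {k}).toReal • ((k : ℕ) : ℝ)
      = ((k : ℕ) : ℝ) * (p * (1 - p) ^ (k - 1)) := by
    intro k
    cases k with
    | zero => simp [h0]
    | succ m =>
      rw [hk _ (Nat.succ_le_succ (Nat.zero_le m)), ENNReal.toReal_ofReal (by positivity),
        smul_eq_mul, mul_comm]
  exact (tsum_congr hterm).trans (geom_tsum_first hp0 hp1)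

lemma geom_integral_sq [IsProbabilityMeasure ν] (hp0 : 0 < p) (hp1 : p ≤ 1) (h0 : ν {0} = 0)
    (hk : ∀ k : ℕ, 1 ≤ k → ν {k} = ENNReal.ofReal (p * (1 - p) ^ (k - 1))) :
    ∫ k, ((k : ℕ) : ℝ) ^ 2 ∂ν = (2 - p) / p ^ 2 := by
  have hq0 : (0 : ℝ) ≤ 1 - p := by linarith
  have hmeas : AEStronglyMeasurable (fun k : ℕ => (k : ℝ)) ν :=
    (measurable_from_top (f := fun k : ℕ => (k : ℝ))).aestronglyMeasurable
  have hint : Integrable (fun k : ℕ => ((k : ℝ)) ^ 2) ν :=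
    (memLp_two_iff_integrable_sq hmeas).1 (geom_memLp2 ν hp0 hp1 h0 hk)
  rw [integral_countable' hint]
  have hterm : ∀ k : ℕ, (ν {k}).toReal • (((k : ℕ) : ℝ) ^ 2)
      = ((k : ℕ) : ℝ) ^ 2 * (p * (1 - p) ^ (k - 1)) := by
    intro k
    cases k with
    | zero => simp [h0]
    | succ m =>
      rw [hk _ (Nat.succ_le_succ (Nat.zero_le m)), ENNReal.toReal_ofReal (by positivity),
        smul_eq_mul, mul_comm]
  exact (tsum_congr hterm).trans (geom_tsum_sq hp0 hp1)

end geomMeasure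

lemma geom_omega {Ω' : Type*} [MeasurableSpace Ω'] (μ' : Measure Ω') [IsProbabilityMeasure μ']
    {p : ℝ} (hp0 : 0 < p) (hp1 : p ≤ 1) (g : Ω' → ℕ) (hg : Measurable g)
    (h0 : μ' {ω | g ω = 0} = 0)
    (hk : ∀ k : ℕ, 1 ≤ k → μ' {ω | g ω = k} = ENNReal.ofReal (p * (1 - p) ^ (k - 1))) :
    MemLp (fun ω => (g ω : ℝ)) 2 μ' ∧ (∫ ω, (g ω : ℝ) ∂μ') = 1 / p ∧
      variance (fun ω => (g ω : ℝ)) μ' ≤ 2 / p ^ 2 := by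
  set ν : Measure ℕ := μ'.map g with hν
  haveI : IsProbabilityMeasure ν := Measure.isProbabilityMeasure_map hg.aemeasurable
  have hsingle : ∀ k : ℕ, ν {k} = μ' {ω | g ω = k} := by
    intro k
    rw [hν, Measure.map_apply hg (measurableSet_singleton k)]
    rfl
  have hν0 : ν {0} = 0 := by rw [hsingle]; exact h0
  have hνk : ∀ k : ℕ, 1 ≤ k → ν {k} = ENNReal.ofReal (p * (1 - p) ^ (k - 1)) := by
    intro k hk1; rw [hsingle]; exact hk k hk1
  have asm1 : AEStronglyMeasurable (fun k : ℕ => (k : ℝ)) ν :=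
    (measurable_from_top (f := fun k : ℕ => (k : ℝ))).aestronglyMeasurable
  have hmem : MemLp (fun ω => (g ω : ℝ)) 2 μ' :=
    (memLp_map_measure_iff asm1 hg.aemeasurable).1 (geom_memLp2 ν hp0 hp1 hν0 hνk)
  refine ⟨hmem, ?_, ?_⟩
  · rw [← geom_integral_first ν hp0 hp1 hν0 hνk, hν, integral_map hg.aemeasurable asm1]
  · have hvar := variance_le_expectation_sq (μ := μ') (X := fun ω => (g ω : ℝ))
      hmem.aestronglyMeasurable
    have hsq : (μ'[(fun ω => (g ω : ℝ)) ^ 2]) = (2 - p) / p ^ 2 := by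
      rw [← geom_integral_sq ν hp0 hp1 hν0 hνk, hν,
        integral_map hg.aemeasurable
          (measurable_from_top (f := fun k : ℕ => ((k : ℝ)) ^ 2)).aestronglyMeasurable]
      rfl
    refine hvar.trans (hsq.le.trans ?_)
    gcongr
    linarith

/-- Coupon collector: the time to obtain ⌈(1-ε)n⌉ distinct coupons, written as the sum
of independent geometric({1,2,...}) variables with success probabilities (n-j)/n for
j = 0,...,⌈(1-ε)n⌉-1, is at most 2((1-ε)/ε)n with probability tending to 1. -/
theorem coupon_collector_partial
    (ε : ℝ) (hε : ε ∈ Set.Ioo (0 : ℝ) 1)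
    (Ω : ℕ → Type) [∀ n : ℕ, MeasurableSpace (Ω n)]
    (μ : ∀ n : ℕ, Measure (Ω n)) [∀ n : ℕ, IsProbabilityMeasure (μ n)]
    (G : ∀ n : ℕ, Fin (⌈(1 - ε) * (n : ℝ)⌉₊) → Ω n → ℕ)
    (hmeas : ∀ n j, Measurable (G n j))
    (hindep : ∀ n : ℕ, iIndepFun (G n) (μ n))
    (hdist : ∀ (n : ℕ) (j : Fin (⌈(1 - ε) * (n : ℝ)⌉₊)), ∀ k : ℕ, 1 ≤ k →
      μ n {ω | G n j ω = k} =
        ENNReal.ofReal ((((n : ℝ) - j) / n) * (1 - ((n : ℝ) - j) / n) ^ (k - 1)))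
    (hzero : ∀ (n : ℕ) (j : Fin (⌈(1 - ε) * (n : ℝ)⌉₊)), μ n {ω | G n j ω = 0} = 0) :
    Tendsto (fun n => μ n {ω |
        ((∑ j, G n j ω : ℕ) : ℝ) ≤ 2 * ((1 - ε) / ε) * n})
      atTop (nhds 1) := by
  obtain ⟨hε0, hε1⟩ := hε
  have h1ε : (0 : ℝ) < 1 - ε := by linarith
  -- the events
  set A : ∀ n : ℕ, Set (Ω n) := fun n =>
    {ω | ((∑ j, G n j ω : ℕ) : ℝ) ≤ 2 * ((1 - ε) / ε) * n} with hA
  have hAmeas : ∀ n, MeasurableSet (A n) := by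
    intro n
    have hS : Measurable (fun ω => ((∑ j, G n j ω : ℕ) : ℝ)) :=
      (measurable_from_top (f := fun k : ℕ => (k : ℝ))).comp
        (Finset.measurable_sum Finset.univ fun j _ => hmeas n j)
    exact measurableSet_le hS measurable_const
  -- main bound for large n
  have main : ∀ n : ℕ, 2 ≤ (1 - ε) * (n : ℝ) →
      μ n (A n)ᶜ ≤ ENNReal.ofReal (16 / ((1 - ε) * n)) := by
    intro n hn2
    have hn0 : (0 : ℝ) < n := by nlinarith
    set a : ℝ := (1 - ε) * n with ha
    have ha0 : (0 : ℝ) < a := by nlinarith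
    set p : Fin (⌈(1 - ε) * (n : ℝ)⌉₊) → ℝ := fun j => ((n : ℝ) - (j : ℕ)) / n with hp
    have hpb : ∀ j, ε < p j ∧ p j ≤ 1 := by
      intro j
      have hj : ((j : ℕ) : ℝ) < (1 - ε) * n := Nat.lt_ceil.1 j.isLt
      have hj0 : (0 : ℝ) ≤ ((j : ℕ) : ℝ) := Nat.cast_nonneg _
      constructor
      · rw [hp, lt_div_iff₀ hn0]; nlinarith
      · rw [hp, div_le_one hn0]; nlinarith
    set X : Fin (⌈(1 - ε) * (n : ℝ)⌉₊) → Ω n → ℝ := fun j ω => (G n j ω : ℝ) with hX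
    have hfacts : ∀ j, MemLp (X j) 2 (μ n) ∧ (∫ ω, X j ω ∂μ n) = 1 / p j ∧
        variance (X j) (μ n) ≤ 2 / p j ^ 2 := fun j =>
      geom_omega (μ n) (hε0.trans (hpb j).1) (hpb j).2 (G n j) (hmeas n j)
        (hzero n j) (hdist n j)
    -- the sum as a function sum
    set S : Ω n → ℝ := ∑ j, X j with hS
    have hSapp : ∀ ω, S ω = ((∑ j, G n j ω : ℕ) : ℝ) := by
      intro ω
      rw [hS, Finset.sum_apply]
      push_cast
      rfl
    have hmemS : MemLp S 2 (μ n) := memLp_finset_sum' _ fun j _ => (hfacts j).1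
    -- expectation bound
    have hES : (∫ ω, S ω ∂μ n) = ∑ j, (1 / p j) := by
      rw [hS]
      have : (∫ ω, (∑ j, X j) ω ∂μ n) = ∫ ω, ∑ j, X j ω ∂μ n := by
        congr 1; funext ω; rw [Finset.sum_apply]
      rw [this, integral_finset_sum _ fun j _ => ((hfacts j).1).integrable one_le_two]
      exact Finset.sum_congr rfl fun j _ => (hfacts j).2.1
    have hm_lt : (⌈(1 - ε) * (n : ℝ)⌉₊ : ℝ) < a + 1 := by
      rw [ha]; exact Nat.ceil_lt_add_one (by positivity)
    have hES_le : (∫ ω, S ω ∂μ n) ≤ (a + 1) / ε := by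
      rw [hES]
      calc ∑ j, (1 / p j) ≤ ∑ j : Fin (⌈(1 - ε) * (n : ℝ)⌉₊), (1 / ε) := by
            refine Finset.sum_le_sum fun j _ => ?_
            exact one_div_le_one_div_of_le hε0 (hpb j).1.le
        _ = (⌈(1 - ε) * (n : ℝ)⌉₊ : ℝ) * (1 / ε) := by
            rw [Finset.sum_const, Finset.card_univ, Fintype.card_fin, nsmul_eq_mul]
        _ ≤ (a + 1) * (1 / ε) := by
            refine mul_le_mul_of_nonneg_right hm_lt.le (by positivity)
        _ = (a + 1) / ε := by ring
    -- variance bound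
    have hiX : iIndepFun X (μ n) :=
      (hindep n).comp (fun _ (k : ℕ) => (k : ℝ)) fun _ => measurable_from_top
    have hvarS : variance S (μ n) = ∑ j, variance (X j) (μ n) :=
      IndepFun.variance_sum (fun j _ => (hfacts j).1)
        fun i _ j _ hij => hiX.indepFun hij
    have hvar_le : variance S (μ n) ≤ (a + 1) * (2 / ε ^ 2) := by
      rw [hvarS]
      calc ∑ j, variance (X j) (μ n)
          ≤ ∑ j : Fin (⌈(1 - ε) * (n : ℝ)⌉₊), (2 / ε ^ 2) := by
            refine Finset.sum_le_sum fun j _ => ?_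
            refine ((hfacts j).2.2).trans ?_
            gcongr
            exact (hpb j).1.le
        _ = (⌈(1 - ε) * (n : ℝ)⌉₊ : ℝ) * (2 / ε ^ 2) := by
            rw [Finset.sum_const, Finset.card_univ, Fintype.card_fin, nsmul_eq_mul]
        _ ≤ (a + 1) * (2 / ε ^ 2) := by
            refine mul_le_mul_of_nonneg_right hm_lt.le (by positivity)
    -- Chebyshev
    set c : ℝ := a / (2 * ε) with hc
    have hc0 : 0 < c := by positivity
    have cheb := meas_ge_le_variance_div_sq (μ := μ n) hmemS hc0
    have hincl : (A n)ᶜ ⊆ {ω | c ≤ |S ω - (∫ ω, S ω ∂μ n)|} := by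
      intro ω hω
      rw [hA, Set.mem_compl_iff, Set.mem_setOf_eq, not_le] at hω
      rw [← hSapp ω] at hω
      have ht : 2 * ((1 - ε) / ε) * n = 2 * a / ε := by rw [ha]; ring
      rw [ht] at hω
      have hEc : (∫ ω, S ω ∂μ n) + c ≤ 2 * a / ε := by
        have : (a + 1) / ε + a / (2 * ε) ≤ 2 * a / ε := by
          rw [div_add_div _ _ (ne_of_gt hε0) (by positivity : (2 : ℝ) * ε ≠ 0),
            div_le_div_iff₀ (by positivity) (by positivity)]
          nlinarith
        linarith [hES_le]
      have : c ≤ S ω - (∫ ω, S ω ∂μ n) := by linarith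
      exact Set.mem_setOf_eq ▸ this.trans (le_abs_self _)
    refine (measure_mono hincl).trans (cheb.trans (ENNReal.ofReal_le_ofReal ?_))
    -- numeric bound
    have hc2 : c ^ 2 = a ^ 2 / (4 * ε ^ 2) := by rw [hc]; ring
    calc variance S (μ n) / c ^ 2 ≤ ((a + 1) * (2 / ε ^ 2)) / c ^ 2 := by
          gcongr
      _ = ((a + 1) * (2 / ε ^ 2)) / (a ^ 2 / (4 * ε ^ 2)) := by rw [hc2]
      _ = 8 * (a + 1) / a ^ 2 := by
          field_simp
          ring
      _ ≤ 16 / a := by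
          rw [div_le_div_iff₀ (by positivity) ha0]
          nlinarith
  -- conclusion
  have hlim0 : Tendsto (fun n : ℕ => μ n (A n)ᶜ) atTop (nhds 0) := by
    have htend : Tendsto (fun n : ℕ => ENNReal.ofReal (16 / ((1 - ε) * n))) atTop (nhds 0) := by
      have h1 : Tendsto (fun n : ℕ => 16 / ((1 - ε) * (n : ℝ))) atTop (nhds 0) := by
        have := tendsto_const_div_atTop_nhds_zero_nat (16 / (1 - ε))
        refine this.congr fun n => ?_
        rw [div_div]
      have := ENNReal.tendsto_ofReal h1
      simpa using this
    have hev : ∀ᶠ n : ℕ in atTop, μ n (A n)ᶜ ≤ ENNReal.ofReal (16 / ((1 - ε) * n)) := by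
      have ha : Tendsto (fun n : ℕ => (1 - ε) * (n : ℝ)) atTop atTop :=
        Tendsto.const_mul_atTop h1ε tendsto_natCast_atTop_atTop
      filter_upwards [ha.eventually_ge_atTop 2] with n hn
      exact main n hn
    exact tendsto_of_tendsto_of_tendsto_of_le_of_le' tendsto_const_nhds htend
      (Eventually.of_forall fun n => zero_le) hev
  have heq : ∀ n, μ n (A n) = 1 - μ n (A n)ᶜ := by
    intro n
    rw [← prob_compl_eq_one_sub (hAmeas n).compl, compl_compl]
  have hsub : Tendsto (fun x : ENNReal => 1 - x) (nhds 0) (nhds 1) := by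
    have := (ENNReal.continuous_sub_left (by simp : (1 : ENNReal) ≠ ⊤)).tendsto 0
    simpa using this
  have := hsub.comp hlim0
  exact this.congr fun n => (heq n).symm
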